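/- Fix 0 < Δ < 1/√d and q ∈ (1, ∞). Define F(x, y, z) = ((1/√d - x)^q + (1/√d - 2Δ/3 + y)^q + (1/√d + 2Δ/3 + z)^q)^{1/q} for x, y, z ∈ [0, Δ/3]. Then there exist 1-Lipschitz, monotonically non-decreasing functions g₁, g₂ : [0, Δ/3] → [0, Δ/3] such that for all t ∈ [0, Δ/3]: g₁(t) + g₂(t) = t and F(t, g₁(t), g₂(t)) = F(0, 0, 0). -/

import Mathlib

open Real Set

private lemma inc_strict (q : ℝ) (hq : 1 < q) {h : ℝ} (hh : 0 < h) :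
    StrictMonoOn (fun x : ℝ => (x + h) ^ q - x ^ q) (Ici 0) := by
  have hq0 : (0:ℝ) ≤ q := by linarith
  apply strictMonoOn_of_deriv_pos (convex_Ici 0)
  · exact (((continuous_id.add continuous_const).rpow_const (fun x => Or.inr hq0)).sub
      (continuous_id.rpow_const (fun x => Or.inr hq0))).continuousOn
  · intro x hx
    rw [interior_Ici] at hx
    have hx0 : (0:ℝ) < x := hx
    have h1 : HasDerivAt (fun y : ℝ => (y + h) ^ q) (q * (x + h) ^ (q - 1) * 1) x :=
      by have := (Real.hasDerivAt_rpow_const (p := q) (Or.inl (by positivity : (0:ℝ) < x + h).ne')).comp x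
            ((hasDerivAt_id x).add_const h); exact this
    have h2 : HasDerivAt (fun y : ℝ => y ^ q) (q * x ^ (q - 1)) x :=
      Real.hasDerivAt_rpow_const (Or.inl hx0.ne')
    rw [(show HasDerivAt (fun y : ℝ => (y + h) ^ q - y ^ q) (q * (x + h) ^ (q - 1) * 1 - q * x ^ (q - 1)) x from h1.sub h2).deriv]
    have hlt : x ^ (q - 1) < (x + h) ^ (q - 1) :=
      Real.rpow_lt_rpow hx0.le (by linarith) (by linarith)
    nlinarith

private lemma inc_le (q : ℝ) (hq : 1 < q) {v u h : ℝ} (hv : 0 ≤ v) (hvu : v ≤ u) (hh : 0 ≤ h) :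
    (v + h) ^ q - v ^ q ≤ (u + h) ^ q - u ^ q := by
  rcases hh.eq_or_lt with rfl | hh'
  · simp
  rcases hvu.eq_or_lt with rfl | hvu'
  · exact le_refl _
  · exact (inc_strict q hq hh' (mem_Ici.mpr hv) (mem_Ici.mpr (hv.trans hvu)) hvu').le

private noncomputable def phi (a Δ q t y : ℝ) : ℝ :=
  (a - t) ^ q + (a - 2 * Δ / 3 + y) ^ q + (a + 2 * Δ / 3 + (t - y)) ^ q

private lemma phi_anti {a Δ q : ℝ} (hΔ0 : 0 < Δ) (hΔ : Δ < a) (hq : 1 < q)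
    {t : ℝ} (ht : t ∈ Icc 0 (Δ / 3)) : StrictAntiOn (phi a Δ q t) (Icc 0 t) := by
  have ha : 0 < a := hΔ0.trans hΔ
  intro y₁ h₁ y₂ h₂ hlt
  have key := inc_strict q hq (h := y₂ - y₁) (by linarith)
    (mem_Ici.mpr (show (0:ℝ) ≤ a - 2 * Δ / 3 + y₁ by
      have := h₁.1; linarith))
    (mem_Ici.mpr (show (0:ℝ) ≤ a + 2 * Δ / 3 + (t - y₂) by
      have := h₂.2; linarith))
    (show a - 2 * Δ / 3 + y₁ < a + 2 * Δ / 3 + (t - y₂) by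
      have h1 := h₂.2; have h2 := ht.2; linarith)
  simp only at key
  have e1 : a - 2 * Δ / 3 + y₁ + (y₂ - y₁) = a - 2 * Δ / 3 + y₂ := by ring
  have e2 : a + 2 * Δ / 3 + (t - y₂) + (y₂ - y₁) = a + 2 * Δ / 3 + (t - y₁) := by ring
  rw [e1, e2] at key
  simp only [phi]
  linarith

private lemma phi_mono_t {a Δ q : ℝ} (hΔ0 : 0 < Δ) (hΔ : Δ < a) (hq : 1 < q)
    {t s y : ℝ} (ht : t ∈ Icc 0 (Δ / 3)) (hs : s ∈ Icc 0 (Δ / 3)) (hts : t ≤ s)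
    (hy : y ∈ Icc 0 t) : phi a Δ q t y ≤ phi a Δ q s y := by
  have ha : 0 < a := hΔ0.trans hΔ
  have key := inc_le q hq (v := a - s) (u := a + 2 * Δ / 3 + (t - y)) (h := s - t)
    (by have := hs.2; linarith)
    (by have := hy.2; have := hs.1; linarith)
    (by linarith)
  have e1 : a - s + (s - t) = a - t := by ring
  have e2 : a + 2 * Δ / 3 + (t - y) + (s - t) = a + 2 * Δ / 3 + (s - y) := by ring
  rw [e1, e2] at key
  simp only [phi]
  linarith

private lemma phi_shift {a Δ q : ℝ} (hΔ0 : 0 < Δ) (hΔ : Δ < a) (hq : 1 < q)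
    {t s y : ℝ} (ht : t ∈ Icc 0 (Δ / 3)) (hs : s ∈ Icc 0 (Δ / 3)) (hts : t ≤ s)
    (hy : y ∈ Icc 0 t) : phi a Δ q s (y + (s - t)) ≤ phi a Δ q t y := by
  have ha : 0 < a := hΔ0.trans hΔ
  have key := inc_le q hq (v := a - 2 * Δ / 3 + y) (u := a - s) (h := s - t)
    (by have := hy.1; linarith)
    (by have h1 := hy.2; have h2 := ht.2; have h3 := hs.2; linarith)
    (by linarith)
  have e1 : a - 2 * Δ / 3 + y + (s - t) = a - 2 * Δ / 3 + (y + (s - t)) := by ring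
  have e2 : a - s + (s - t) = a - t := by ring
  rw [e1, e2] at key
  have e3 : s - (y + (s - t)) = t - y := by ring
  simp only [phi, e3]
  linarith

private lemma phi_exists {a Δ q : ℝ} (hΔ0 : 0 < Δ) (hΔ : Δ < a) (hq : 1 < q) :
    ∀ t ∈ Icc (0:ℝ) (Δ / 3), ∃ y, y ∈ Icc 0 t ∧ phi a Δ q t y = phi a Δ q 0 0 := by
  have ha : 0 < a := hΔ0.trans hΔ
  have hq0 : (0:ℝ) ≤ q := by linarith
  intro t ht
  have hc : Continuous (phi a Δ q t) := by
    unfold phi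
    exact (continuous_const.add
      (((continuous_const.add continuous_id).rpow_const (fun _ => Or.inr hq0)))).add
      ((continuous_const.add (continuous_const.sub continuous_id)).rpow_const
        (fun _ => Or.inr hq0))
  -- endpoint inequalities
  have hupper : phi a Δ q 0 0 ≤ phi a Δ q t 0 := by
    have key := inc_le q hq (v := a - t) (u := a + 2 * Δ / 3) (h := t)
      (by have := ht.2; linarith) (by have := ht.1; linarith) ht.1
    have e1 : a - t + t = a := by ring
    rw [e1] at key
    simp only [phi, sub_zero, add_zero, sub_self]
    linarith
  have hlower : phi a Δ q t t ≤ phi a Δ q 0 0 := by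
    have key := inc_le q hq (v := a - 2 * Δ / 3) (u := a - t) (h := t)
      (by linarith) (by have := ht.2; linarith) ht.1
    have e1 : a - t + t = a := by ring
    rw [e1] at key
    simp only [phi, sub_zero, add_zero, sub_self]
    linarith
  have hsub := intermediate_value_Icc' ht.1 hc.continuousOn
  have hmem : phi a Δ q 0 0 ∈ Icc (phi a Δ q t t) (phi a Δ q t 0) := ⟨hlower, hupper⟩
  obtain ⟨y, hy, hyeq⟩ := hsub hmem
  exact ⟨y, hy, hyeq⟩

/-- For `0 < Δ < 1/√d` and `q ∈ (1, ∞)`, with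
`F(x,y,z) = ((1/√d - x)^q + (1/√d - 2Δ/3 + y)^q + (1/√d + 2Δ/3 + z)^q)^{1/q}`,
there exist `1`-Lipschitz, monotone non-decreasing `g₁, g₂ : [0, Δ/3] → [0, Δ/3]`
such that for all `t ∈ [0, Δ/3]`: `g₁(t) + g₂(t) = t` and
`F(t, g₁(t), g₂(t)) = F(0,0,0)`. -/
theorem exists_g1_g2 (d : ℕ) (hd : 1 ≤ d) (Δ : ℝ) (hΔ0 : 0 < Δ)
    (hΔ : Δ < 1 / Real.sqrt d) (q : ℝ) (hq : 1 < q)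
    (F : ℝ → ℝ → ℝ → ℝ)
    (hF : ∀ x y z : ℝ, F x y z =
      ((1 / Real.sqrt d - x) ^ q + (1 / Real.sqrt d - 2 * Δ / 3 + y) ^ q +
        (1 / Real.sqrt d + 2 * Δ / 3 + z) ^ q) ^ (1 / q)) :
    ∃ g₁ g₂ : ℝ → ℝ,
      (∀ t ∈ Set.Icc 0 (Δ / 3), g₁ t ∈ Set.Icc 0 (Δ / 3) ∧ g₂ t ∈ Set.Icc 0 (Δ / 3)) ∧
      LipschitzOnWith 1 g₁ (Set.Icc 0 (Δ / 3)) ∧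
      LipschitzOnWith 1 g₂ (Set.Icc 0 (Δ / 3)) ∧
      MonotoneOn g₁ (Set.Icc 0 (Δ / 3)) ∧
      MonotoneOn g₂ (Set.Icc 0 (Δ / 3)) ∧
      ∀ t ∈ Set.Icc 0 (Δ / 3), g₁ t + g₂ t = t ∧ F t (g₁ t) (g₂ t) = F 0 0 0 := by
  classical
  set a : ℝ := 1 / Real.sqrt d with ha_def
  have key : ∀ t ∈ Icc (0:ℝ) (Δ / 3), ∃ y, y ∈ Icc 0 t ∧ phi a Δ q t y = phi a Δ q 0 0 :=
    phi_exists hΔ0 hΔ hq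
  set g₁ : ℝ → ℝ := fun t => if h : t ∈ Icc (0:ℝ) (Δ / 3) then (key t h).choose else 0 with hg1
  set g₂ : ℝ → ℝ := fun t => t - g₁ t with hg2
  have hspec : ∀ t (h : t ∈ Icc (0:ℝ) (Δ / 3)),
      g₁ t ∈ Icc 0 t ∧ phi a Δ q t (g₁ t) = phi a Δ q 0 0 := by
    intro t h
    simp only [hg1, dif_pos h]
    exact (key t h).choose_spec
  have hmono : ∀ t, t ∈ Icc (0:ℝ) (Δ / 3) → ∀ s, s ∈ Icc (0:ℝ) (Δ / 3) → t ≤ s →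
      g₁ t ≤ g₁ s ∧ g₁ s ≤ g₁ t + (s - t) := by
    intro t ht s hs hts
    obtain ⟨hyt, het⟩ := hspec t ht
    obtain ⟨hys, hes⟩ := hspec s hs
    have anti := phi_anti hΔ0 hΔ hq hs
    have hytm : g₁ t ∈ Icc 0 s := ⟨hyt.1, hyt.2.trans hts⟩
    constructor
    · by_contra hcon
      push_neg at hcon
      have h1 : phi a Δ q s (g₁ t) < phi a Δ q s (g₁ s) := anti hys hytm hcon
      have h2 : phi a Δ q t (g₁ t) ≤ phi a Δ q s (g₁ t) :=
        phi_mono_t hΔ0 hΔ hq ht hs hts hyt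
      linarith
    · by_contra hcon
      push_neg at hcon
      have hmem : g₁ t + (s - t) ∈ Icc 0 s :=
        ⟨by have := hyt.1; linarith, by have := hyt.2; linarith⟩
      have h1 : phi a Δ q s (g₁ s) < phi a Δ q s (g₁ t + (s - t)) := anti hmem hys hcon
      have h2 : phi a Δ q s (g₁ t + (s - t)) ≤ phi a Δ q t (g₁ t) :=
        phi_shift hΔ0 hΔ hq ht hs hts hyt
      linarith
  refine ⟨g₁, g₂, ?_, ?_, ?_, ?_, ?_, ?_⟩
  · intro t ht
    obtain ⟨hyt, -⟩ := hspec t ht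
    refine ⟨⟨hyt.1, hyt.2.trans ht.2⟩, ?_⟩
    simp only [hg2]
    exact ⟨by have := hyt.2; linarith, by have := hyt.1; have := ht.2; linarith⟩
  · rw [lipschitzOnWith_iff_dist_le_mul]
    intro x hx y hy
    rw [NNReal.coe_one, one_mul, Real.dist_eq, Real.dist_eq]
    rcases le_total x y with hxy | hxy
    · have h1 := hmono x hx y hy hxy
      rw [abs_le]
      constructor <;>
        [skip; skip] <;>
        nlinarith [neg_abs_le (x - y), le_abs_self (x - y), abs_nonneg (x - y)]
    · have h1 := hmono y hy x hx hxy
      rw [abs_le]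
      constructor <;>
        [skip; skip] <;>
        nlinarith [neg_abs_le (x - y), le_abs_self (x - y), abs_nonneg (x - y)]
  · rw [lipschitzOnWith_iff_dist_le_mul]
    intro x hx y hy
    rw [NNReal.coe_one, one_mul, Real.dist_eq, Real.dist_eq]
    simp only [hg2]
    rcases le_total x y with hxy | hxy
    · have h1 := hmono x hx y hy hxy
      rw [abs_le]
      constructor <;>
        nlinarith [neg_abs_le (x - y), le_abs_self (x - y), abs_nonneg (x - y)]
    · have h1 := hmono y hy x hx hxy
      rw [abs_le]
      constructor <;>
        nlinarith [neg_abs_le (x - y), le_abs_self (x - y), abs_nonneg (x - y)]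
  · intro x hx y hy hxy
    exact (hmono x hx y hy hxy).1
  · intro x hx y hy hxy
    have h1 := hmono x hx y hy hxy
    simp only [hg2]
    linarith [h1.2]
  · intro t ht
    refine ⟨by simp only [hg2]; ring, ?_⟩
    have h2 := (hspec t ht).2
    simp only [phi] at h2
    rw [hF, hF]
    simp only [hg2]
    norm_num at h2 ⊢
    rw [h2]
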